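/- Let π ∈ S_n be a cyclic permutation with n ≥ 5 and standard cycle form C(π) = (1, c_2, …, c_n) with j = c_2 ≥ 3. Then C(π) avoids both 321 and 2143 if and only if the following three conditions hold: (1) the letters 2, 3, …, j−1 occur in this (increasing) order in C(π); (2) the letters greater than j that occur between j and j−1 in C(π) are in increasing order; (3) the letters greater than j that occur after 2 in C(π) are in increasing order. -/

import Mathlib

/-- A word `w` (of distinct letters) contains the pattern `σ` if it has a
subsequence order-isomorphic to `σ`. -/
def PContains {n k : ℕ} (w : Fin n → Fin n) (σ : Fin k → Fin k) : Prop :=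
  ∃ f : Fin k → Fin n, StrictMono f ∧ ∀ a b : Fin k, σ a < σ b ↔ w (f a) < w (f b)

/-- A word avoids a pattern if it does not contain it. -/
def PAvoids {n k : ℕ} (w : Fin n → Fin n) (σ : Fin k → Fin k) : Prop :=
  ¬ PContains w σ

/-- The decreasing pattern `δ_k = k(k-1)⋯21` (written 0-indexed). -/
def delta (k : ℕ) : Fin k → Fin k := fun i => i.rev

/-- The pattern 1432 (0-indexed as 0321). -/
def patt1432 : Fin 4 → Fin 4 := ![0, 3, 2, 1]

/-- The pattern 321 (0-indexed as 210). -/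
def patt321 : Fin 3 → Fin 3 := ![2, 1, 0]

/-- The pattern 2143 (0-indexed as 1032). -/
def patt2143 : Fin 4 → Fin 4 := ![1, 0, 3, 2]

/-- The pattern 123 (0-indexed as 012). -/
def patt123 : Fin 3 → Fin 3 := ![0, 1, 2]

/-- `π` is a cyclic permutation: it consists of a single `n`-cycle. -/
def IsNCycle {n : ℕ} (π : Equiv.Perm (Fin n)) : Prop :=
  π.IsCycle ∧ π.support = Finset.univ

/-- The standard cycle form `C(π) = (1, c₂, …, c_n)` of `π`, as a word:
the `i`-th letter is `π^i` applied to the least element (the element "1"). -/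
def cycleForm {n : ℕ} (π : Equiv.Perm (Fin n)) : Fin n → Fin n :=
  fun i => (π ^ (i : ℕ)) ⟨0, i.pos⟩

/-- All cycle forms (cyclic rotations of the standard cycle form) of the
cyclic permutation `π` avoid the pattern `σ`: for every starting letter `x`,
the word `x, π(x), π²(x), …` avoids `σ`. -/
def AllCycleFormsAvoid {n k : ℕ} (π : Equiv.Perm (Fin n)) (σ : Fin k → Fin k) : Prop :=
  ∀ x : Fin n, PAvoids (fun i : Fin n => (π ^ (i : ℕ)) x) σ

/-- `A_n^∘(δ_k; 1432)`: cyclic permutations of `[n]` whose one-line notation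
avoids `δ_k` and all of whose cycle forms avoid `1432`. -/
def Acirc (n k : ℕ) : Set (Equiv.Perm (Fin n)) :=
  { π | IsNCycle π ∧ PAvoids (fun i => π i) (delta k) ∧ AllCycleFormsAvoid π patt1432 }

/-- `A_{n,j}^∘(δ_k; 1432)`: members of `A_n^∘(δ_k;1432)` whose standard cycle
form begins `(1, j, …)`, i.e. `π` sends the element "1" to the element "j"
(0-indexed: `π 0 = j - 1`). -/
def AcircJ (n k j : ℕ) : Set (Equiv.Perm (Fin n)) :=
  { π | π ∈ Acirc n k ∧ ∀ h : 0 < n, ((π ⟨0, h⟩ : Fin n) : ℕ) + 1 = j }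

/-- `a_n^∘(δ_k; 1432)`. -/
noncomputable def acirc (n k : ℕ) : ℕ := (Acirc n k).ncard

/-- `a_{n,j}^∘(δ_k; 1432)`. -/
noncomputable def acircJ (n k j : ℕ) : ℕ := (AcircJ n k j).ncard

lemma pcontains321 {n : ℕ} (w : Fin n → Fin n) (i1 i2 i3 : Fin n)
    (h12 : i1 < i2) (h23 : i2 < i3)
    (v21 : (w i2 : ℕ) < w i1) (v32 : (w i3 : ℕ) < w i2) : PContains w patt321 := by
  have v31 : (w i3 : ℕ) < w i1 := v32.trans v21
  rw [Fin.lt_def] at h12 h23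
  refine ⟨fun a => if a.val = 0 then i1 else if a.val = 1 then i2 else i3, ?_, ?_⟩
  · rintro ⟨a, ha⟩ ⟨b, hb⟩ hab
    rw [Fin.lt_def] at hab ⊢
    simp only at hab ⊢
    interval_cases a <;> interval_cases b <;> simp <;> omega
  · rintro ⟨a, ha⟩ ⟨b, hb⟩
    have e0 : (patt321 ⟨0, by omega⟩ : ℕ) = 2 := rfl
    have e1 : (patt321 ⟨1, by omega⟩ : ℕ) = 1 := rfl
    have e2 : (patt321 ⟨2, by omega⟩ : ℕ) = 0 := rfl
    interval_cases a <;> interval_cases b <;>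
      simp only [Fin.lt_def, e0, e1, e2] <;> norm_num <;> omega

lemma pcontains2143 {n : ℕ} (w : Fin n → Fin n) (i1 i2 i3 i4 : Fin n)
    (h12 : i1 < i2) (h23 : i2 < i3) (h34 : i3 < i4)
    (v1 : (w i2 : ℕ) < w i1) (v2 : (w i1 : ℕ) < w i4) (v3 : (w i4 : ℕ) < w i3) :
    PContains w patt2143 := by
  have v4 : (w i2 : ℕ) < w i4 := v1.trans v2
  have v5 : (w i1 : ℕ) < w i3 := v2.trans v3
  have v6 : (w i2 : ℕ) < w i3 := v1.trans v5
  rw [Fin.lt_def] at h12 h23 h34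
  refine ⟨fun a => if a.val = 0 then i1 else if a.val = 1 then i2 else
      if a.val = 2 then i3 else i4, ?_, ?_⟩
  · rintro ⟨a, ha⟩ ⟨b, hb⟩ hab
    rw [Fin.lt_def] at hab ⊢
    simp only at hab ⊢
    interval_cases a <;> interval_cases b <;> simp <;> omega
  · rintro ⟨a, ha⟩ ⟨b, hb⟩
    have e0 : (patt2143 ⟨0, by omega⟩ : ℕ) = 1 := rfl
    have e1 : (patt2143 ⟨1, by omega⟩ : ℕ) = 0 := rfl
    have e2 : (patt2143 ⟨2, by omega⟩ : ℕ) = 3 := rfl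
    have e3 : (patt2143 ⟨3, by omega⟩ : ℕ) = 2 := rfl
    interval_cases a <;> interval_cases b <;>
      simp only [Fin.lt_def, e0, e1, e2, e3] <;> norm_num <;> omega

lemma of_pcontains321 {n : ℕ} {w : Fin n → Fin n} (h : PContains w patt321) :
    ∃ i1 i2 i3 : Fin n, i1 < i2 ∧ i2 < i3 ∧ (w i2 : ℕ) < w i1 ∧ (w i3 : ℕ) < w i2 := by
  obtain ⟨f, hmono, hiso⟩ := h
  exact ⟨f 0, f 1, f 2, hmono (by decide), hmono (by decide),
    (hiso 1 0).mp (by decide), (hiso 2 1).mp (by decide)⟩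

lemma of_pcontains2143 {n : ℕ} {w : Fin n → Fin n} (h : PContains w patt2143) :
    ∃ i1 i2 i3 i4 : Fin n, i1 < i2 ∧ i2 < i3 ∧ i3 < i4 ∧
      (w i2 : ℕ) < w i1 ∧ (w i1 : ℕ) < w i4 ∧ (w i4 : ℕ) < w i3 := by
  obtain ⟨f, hmono, hiso⟩ := h
  exact ⟨f 0, f 1, f 2, f 3, hmono (by decide), hmono (by decide), hmono (by decide),
    (hiso 1 0).mp (by decide), (hiso 0 3).mp (by decide), (hiso 3 2).mp (by decide)⟩

lemma cycleForm_injective {n : ℕ} (π : Equiv.Perm (Fin n)) (hπ : IsNCycle π) :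
    Function.Injective (cycleForm π) := by
  intro a b hab
  have hn0 : 0 < n := a.pos
  have hmem : (⟨0, hn0⟩ : Fin n) ∈ π.support := by
    rw [hπ.2]; exact Finset.mem_univ _
  have hco : π.cycleOf ⟨0, hn0⟩ = π :=
    Equiv.Perm.IsCycle.cycleOf_eq hπ.1 (Equiv.Perm.mem_support.mp hmem)
  have hcyc := Equiv.Perm.isCycleOn_support_cycleOf π ⟨0, hn0⟩
  rw [hco] at hcyc
  have hmod := (hcyc.pow_apply_eq_pow_apply (m := (a : ℕ)) (n := (b : ℕ)) hmem).mp ?_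
  · rw [hπ.2, Finset.card_univ, Fintype.card_fin] at hmod
    exact Fin.ext (Nat.ModEq.eq_of_lt_of_lt hmod a.isLt b.isLt)
  · have h1 : cycleForm π a = (π ^ (a : ℕ)) ⟨0, hn0⟩ := rfl
    have h2 : cycleForm π b = (π ^ (b : ℕ)) ⟨0, hn0⟩ := rfl
    rw [← h1, ← h2, hab]

/-- Lemma 2.2: for a cyclic `π ∈ S_n`, `n ≥ 5`, with `C(π) = (1, j, …)` and
`j ≥ 3`, the cycle form `C(π)` avoids both `321` and `2143` iff
(1) the letters `2, …, j-1` occur in increasing order in `C(π)`;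
(2) the letters `> j` occurring between `j` (which sits at index 1) and `j-1`
are in increasing order;
(3) the letters `> j` occurring after `2` are in increasing order.
(Letters are recorded 0-indexed: the letter with 1-indexed value `v` is the
element `v - 1` of `Fin n`.) -/
theorem stmt4 (n j : ℕ) (hn : 5 ≤ n) (hj3 : 3 ≤ j) (hjn : j ≤ n)
    (π : Equiv.Perm (Fin n)) (hπ : IsNCycle π)
    (hj : (cycleForm π ⟨1, by omega⟩ : ℕ) + 1 = j) :
    (PAvoids (cycleForm π) patt321 ∧ PAvoids (cycleForm π) patt2143) ↔
      ((∀ p q : Fin n, p < q →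
          1 ≤ (cycleForm π p : ℕ) → (cycleForm π p : ℕ) + 2 ≤ j →
          1 ≤ (cycleForm π q : ℕ) → (cycleForm π q : ℕ) + 2 ≤ j →
          (cycleForm π p : ℕ) < (cycleForm π q : ℕ)) ∧
       (∀ pj1 p q : Fin n, (cycleForm π pj1 : ℕ) + 2 = j →
          1 < (p : ℕ) → p < q → q < pj1 →
          j ≤ (cycleForm π p : ℕ) → j ≤ (cycleForm π q : ℕ) →
          (cycleForm π p : ℕ) < (cycleForm π q : ℕ)) ∧
       (∀ p2 p q : Fin n, (cycleForm π p2 : ℕ) = 1 →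
          p2 < p → p < q →
          j ≤ (cycleForm π p : ℕ) → j ≤ (cycleForm π q : ℕ) →
          (cycleForm π p : ℕ) < (cycleForm π q : ℕ))) := by
  have hn0 : 0 < n := by omega
  have winj : Function.Injective (cycleForm π) := cycleForm_injective π hπ
  have wsurj : Function.Surjective (cycleForm π) := Finite.surjective_of_injective winj
  set w := cycleForm π with hwdef
  set zero0 : Fin n := ⟨0, hn0⟩ with hzero0
  set one1 : Fin n := ⟨1, by omega⟩ with hone1
  have hv0 : w zero0 = zero0 := by
    show (π ^ ((zero0 : Fin n) : ℕ)) ⟨0, _⟩ = zero0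
    norm_num
    rfl
  have hv0' : (w zero0 : ℕ) = 0 := by rw [hv0]
  have hj' : (w one1 : ℕ) + 1 = j := hj
  have hval0 : ∀ p : Fin n, (p : ℕ) = 0 → (w p : ℕ) = 0 := by
    intro p hp
    have : p = zero0 := Fin.ext hp
    rw [this, hv0']
  have hval1 : ∀ p : Fin n, (p : ℕ) = 1 → (w p : ℕ) + 1 = j := by
    intro p hp
    have : p = one1 := Fin.ext hp
    rw [this]; exact hj'
  have hz : ∀ p : Fin n, (w p : ℕ) = 0 → (p : ℕ) = 0 := by
    intro p hp
    have : p = zero0 := winj (Fin.ext (by simp [hp, hv0']))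
    rw [this]
  have hjm1 : ∀ p : Fin n, (w p : ℕ) + 1 = j → (p : ℕ) = 1 := by
    intro p hp
    have : p = one1 := winj (Fin.ext (by omega))
    rw [this]
  have hge2 : ∀ p : Fin n, 1 ≤ (w p : ℕ) → (w p : ℕ) + 1 ≠ j → 2 ≤ (p : ℕ) := by
    intro p hp hne
    by_cases h0 : (p : ℕ) = 0
    · have := hval0 p h0; omega
    by_cases h1 : (p : ℕ) = 1
    · exact absurd (hval1 p h1) hne
    omega
  constructor
  · rintro ⟨hA321, hA2143⟩
    refine ⟨?_, ?_, ?_⟩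
    · -- condition (1)
      intro p q hpq h1p h2p h1q h2q
      by_contra hc
      have hne : (w p : ℕ) ≠ (w q : ℕ) := fun h => (ne_of_lt hpq) (winj (Fin.ext h))
      have hlt : (w q : ℕ) < w p := by omega
      have hp2 : 2 ≤ (p : ℕ) := hge2 p h1p (by omega)
      exact hA321 (pcontains321 w one1 p q
        (by rw [Fin.lt_def]; show 1 < (p : ℕ); omega) hpq (by omega) hlt)
    · -- condition (2)
      intro pj1 p q hpj1 h1p hpq hqpj1 hjp hjq
      by_contra hc
      have hne : (w p : ℕ) ≠ (w q : ℕ) := fun h => (ne_of_lt hpq) (winj (Fin.ext h))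
      have hlt : (w q : ℕ) < w p := by omega
      exact hA321 (pcontains321 w p q pj1 hpq hqpj1 hlt (by omega))
    · -- condition (3)
      intro p2 p q hp2 hp2p hpq hjp hjq
      by_contra hc
      have hne : (w p : ℕ) ≠ (w q : ℕ) := fun h => (ne_of_lt hpq) (winj (Fin.ext h))
      have hlt : (w q : ℕ) < w p := by omega
      have hp22 : 2 ≤ (p2 : ℕ) := hge2 p2 (by omega) (by omega)
      exact hA2143 (pcontains2143 w one1 p2 p q
        (by rw [Fin.lt_def]; show 1 < (p2 : ℕ); omega) hp2p hpq
        (by omega) (by omega) hlt)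
  · rintro ⟨h1, h2, h3⟩
    obtain ⟨p1, hp1⟩ := wsurj ⟨1, by omega⟩
    have hp1v : (w p1 : ℕ) = 1 := by rw [hp1]
    obtain ⟨pj2, hpj2⟩ := wsurj ⟨j - 2, by omega⟩
    have hpj2v : (w pj2 : ℕ) = j - 2 := by rw [hpj2]
    have hsmall_le : ∀ p : Fin n, 1 ≤ (w p : ℕ) → (w p : ℕ) + 2 ≤ j → (p : ℕ) ≤ (pj2 : ℕ) := by
      intro p hp1' hp2'
      by_contra hc
      have := h1 pj2 p (Fin.lt_def.mpr (by omega)) (by omega) (by omega) hp1' hp2'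
      omega
    have hsmall_ge : ∀ p : Fin n, 1 ≤ (w p : ℕ) → (w p : ℕ) + 2 ≤ j → (p1 : ℕ) ≤ (p : ℕ) := by
      intro p hp1' hp2'
      by_contra hc
      have := h1 p p1 (Fin.lt_def.mpr (by omega)) hp1' hp2' (by omega) (by omega)
      omega
    have hp1le2 : (p1 : ℕ) ≤ (pj2 : ℕ) := hsmall_le p1 (by omega) (by omega)
    have h2ge : ∀ p : Fin n, j ≤ (w p : ℕ) → 1 < (p : ℕ) := by
      intro p h
      have := hge2 p (by omega) (by omega); omega
    have hKL : ∀ p q : Fin n, p < q → j ≤ (w p : ℕ) → j ≤ (w q : ℕ) →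
        (w q : ℕ) < (w p : ℕ) → (p : ℕ) < (p1 : ℕ) ∧ (pj2 : ℕ) < (q : ℕ) := by
      intro p q hpq hjp hjq hdec
      constructor
      · by_contra hc
        push_neg at hc
        have hne : (p1 : ℕ) ≠ (p : ℕ) := by
          intro h
          have : p1 = p := Fin.ext h
          rw [this] at hp1v; omega
        have := h3 p1 p q hp1v (Fin.lt_def.mpr (by omega)) hpq hjp hjq
        omega
      · by_contra hc
        push_neg at hc
        have hne : (q : ℕ) ≠ (pj2 : ℕ) := by
          intro h
          have : q = pj2 := Fin.ext h
          rw [this] at hjq; omega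
        have := h2 pj2 p q (by omega) (h2ge p hjp) hpq (Fin.lt_def.mpr (by omega)) hjp hjq
        omega
    constructor
    · -- avoids 321
      intro hcon
      obtain ⟨i1, i2, i3, h12, h23, v21, v32⟩ := of_pcontains321 hcon
      have n12 : (i1 : ℕ) < i2 := h12
      have n23 : (i2 : ℕ) < i3 := h23
      by_cases hc3 : j ≤ (w i3 : ℕ)
      · obtain ⟨ha, _⟩ := hKL i2 i3 h23 (by omega) hc3 v32
        obtain ⟨_, hb'⟩ := hKL i1 i2 h12 (by omega) (by omega) v21
        omega
      · push_neg at hc3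
        have h1i3 : 1 ≤ (w i3 : ℕ) := by
          by_contra h
          have := hz i3 (by omega); omega
        have hi3nj1 : (w i3 : ℕ) + 1 ≠ j := by
          intro h
          have := hjm1 i3 h; omega
        by_cases hc2 : j ≤ (w i2 : ℕ)
        · have hsm : (i3 : ℕ) ≤ (pj2 : ℕ) := hsmall_le i3 h1i3 (by omega)
          have h1i1 : 1 < (i1 : ℕ) := h2ge i1 (by omega)
          have := h2 pj2 i1 i2 (by omega) h1i1 h12 (Fin.lt_def.mpr (by omega))
            (by omega) hc2
          omega
        · push_neg at hc2
          have h1i2 : 1 ≤ (w i2 : ℕ) := by omega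
          have hi2nj1 : (w i2 : ℕ) + 1 ≠ j := by
            intro h
            have hh := hjm1 i2 h
            have : (i1 : ℕ) = 0 := by omega
            have := hval0 i1 this
            omega
          have := h1 i2 i3 h23 h1i2 (by omega) h1i3 (by omega)
          omega
    · -- avoids 2143
      intro hcon
      obtain ⟨i1, i2, i3, i4, h12, h23, h34, v1, v2, v3⟩ := of_pcontains2143 hcon
      have n12 : (i1 : ℕ) < i2 := h12
      have n23 : (i2 : ℕ) < i3 := h23
      have n34 : (i3 : ℕ) < i4 := h34
      by_cases hc4 : j ≤ (w i4 : ℕ)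
      · obtain ⟨ha, _⟩ := hKL i3 i4 h34 (by omega) hc4 v3
        by_cases hc2 : j ≤ (w i2 : ℕ)
        · obtain ⟨_, hb'⟩ := hKL i1 i2 h12 (by omega) hc2 v1
          omega
        · push_neg at hc2
          have h1i2 : 1 ≤ (w i2 : ℕ) := by
            by_contra h
            have := hz i2 (by omega); omega
          have hi2nj1 : (w i2 : ℕ) + 1 ≠ j := by
            intro h
            have hh := hjm1 i2 h
            have : (i1 : ℕ) = 0 := by omega
            have := hval0 i1 this
            omega
          have := hsmall_ge i2 h1i2 (by omega)
          omega
      · push_neg at hc4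
        have h1i4 : 1 ≤ (w i4 : ℕ) := by
          by_contra h
          have := hz i4 (by omega); omega
        have hi4nj1 : (w i4 : ℕ) + 1 ≠ j := by
          intro h
          have := hjm1 i4 h; omega
        have h1i2 : 1 ≤ (w i2 : ℕ) := by
          by_contra h
          have := hz i2 (by omega); omega
        have := h1 i1 i2 h12 (by omega) (by omega) h1i2 (by omega)
        omega
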